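/- For x ∈ (0,1/2), the limit \lim_{n→∞} \frac{(1-x)^n}{n} \sum_{j=0}^{n-1} (n-j)\binom{n-1+j}{j} x^j = \frac{1-2x}{1-x} holds. -/

import Mathlib

open Filter Finset

private lemma choose_le_two_pow' (n k : ℕ) : n.choose k ≤ 2 ^ n := by
  rcases le_or_gt k n with h | h
  · calc n.choose k ≤ ∑ m ∈ Finset.range (n + 1), n.choose m :=
        Finset.single_le_sum (fun _ _ => Nat.zero_le _) (Finset.mem_range.2 (by omega))
      _ = 2 ^ n := Nat.sum_range_choose n
  · simp [Nat.choose_eq_zero_of_lt h]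

theorem stmt_9 (x : ℝ) (hx : x ∈ Set.Ioo (0:ℝ) (1/2)) :
    Filter.Tendsto
      (fun n : ℕ => (1 - x) ^ n / (n : ℝ) *
        ∑ j ∈ Finset.range n, ((n - j : ℕ) : ℝ) * ((n - 1 + j).choose j : ℝ) * x ^ j)
      Filter.atTop (nhds ((1 - 2 * x) / (1 - x))) := by
  obtain ⟨hx0, hx1⟩ := hx
  have h2x : 2 * x < 1 := by linarith
  have h1x : (0:ℝ) < 1 - x := by linarith
  have h12x : (0:ℝ) < 1 - 2 * x := by linarith
  have hxabs : ‖x‖ < 1 := by rw [Real.norm_eq_abs, abs_of_pos hx0]; linarith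
  have hq0 : (0:ℝ) ≤ 4 * x * (1 - x) := by positivity
  have hq1 : 4 * x * (1 - x) < 1 := by nlinarith [mul_pos h12x h12x]
  set f : ℕ → ℕ → ℝ := fun k j => ((k + j).choose j : ℝ) * x ^ j with hf
  -- the full negative binomial series
  have hsum : ∀ k : ℕ, HasSum (f k) (1 / (1 - x) ^ (k + 1)) := by
    intro k
    have h := hasSum_choose_mul_geometric_of_norm_lt_one (𝕜 := ℝ) k hxabs
    refine h.congr_fun fun j => ?_
    simp only [hf]
    rw [Nat.add_comm j k, Nat.choose_symm_add]
  have hsummable : ∀ k m : ℕ, Summable (fun j => f k (j + m)) :=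
    fun k m => (summable_nat_add_iff m).2 (hsum k).summable
  -- tail bound
  have tail_le : ∀ k m : ℕ,
      ∑' j, f k (j + m) ≤ 2 ^ (k + m) * x ^ m * (1 - 2 * x)⁻¹ := by
    intro k m
    have hgeo : HasSum (fun j : ℕ => (2 ^ (k + m) * x ^ m) * (2 * x) ^ j)
        ((2 ^ (k + m) * x ^ m) * (1 - 2 * x)⁻¹) := by
      exact (hasSum_geometric_of_lt_one (by positivity) h2x).mul_left _
    have hle : ∀ j : ℕ, f k (j + m) ≤ (2 ^ (k + m) * x ^ m) * (2 * x) ^ j := by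
      intro j
      have h1 : ((k + (j + m)).choose (j + m) : ℝ) ≤ 2 ^ (k + (j + m)) := by
        exact_mod_cast choose_le_two_pow' (k + (j + m)) (j + m)
      calc f k (j + m) = ((k + (j + m)).choose (j + m) : ℝ) * x ^ (j + m) := rfl
        _ ≤ 2 ^ (k + (j + m)) * x ^ (j + m) := by
            apply mul_le_mul_of_nonneg_right h1 (by positivity)
        _ = (2 ^ (k + m) * x ^ m) * (2 * x) ^ j := by
            rw [show k + (j + m) = (k + m) + j from by omega, pow_add, pow_add, mul_pow]
            ring
    calc ∑' j, f k (j + m) ≤ ∑' j, (2 ^ (k + m) * x ^ m) * (2 * x) ^ j :=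
        Summable.tsum_le_tsum hle (hsummable k m) hgeo.summable
      _ = (2 ^ (k + m) * x ^ m) * (1 - 2 * x)⁻¹ := hgeo.tsum_eq
  have tail_nonneg : ∀ k m : ℕ, 0 ≤ ∑' j, f k (j + m) :=
    fun k m => tsum_nonneg fun j => by positivity
  -- error terms
  set E1 : ℕ → ℝ := fun n => (1 - x) ^ n * ∑' j, f (n - 1) (j + n) with hE1def
  set E2 : ℕ → ℝ := fun n => x * (1 - x) ^ n * ∑' j, f n (j + (n - 1)) with hE2def
  have hbound : ∀ n : ℕ, 1 ≤ n → ∀ a b : ℕ, a + b = 2 * n - 1 →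
      (1 - x) ^ n * (2 ^ (a + b) * x ^ (n - 1) * (1 - 2 * x)⁻¹) * x
        ≤ (4 * x * (1 - x)) ^ n * (1 - 2 * x)⁻¹ := by
    intro n hn a b hab
    have h2 : (2:ℝ) ^ (a + b) ≤ 4 ^ n := by
      calc (2:ℝ) ^ (a + b) ≤ 2 ^ (2 * n) := by
            apply pow_le_pow_right₀ one_le_two; omega
        _ = 4 ^ n := by rw [pow_mul]; norm_num
    have hx' : x ^ (n - 1) * x = x ^ n := by
      rw [← pow_succ, show n - 1 + 1 = n from by omega]
    calc (1 - x) ^ n * (2 ^ (a + b) * x ^ (n - 1) * (1 - 2 * x)⁻¹) * x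
        ≤ (1 - x) ^ n * (4 ^ n * x ^ (n - 1) * (1 - 2 * x)⁻¹) * x := by
          gcongr
      _ = 4 ^ n * x ^ n * (1 - x) ^ n * (1 - 2 * x)⁻¹ := by
          rw [← hx']; ring
      _ = (4 * x * (1 - x)) ^ n * (1 - 2 * x)⁻¹ := by
          rw [mul_pow, mul_pow]
  have hqlim : Tendsto (fun n : ℕ => (4 * x * (1 - x)) ^ n * (1 - 2 * x)⁻¹)
      atTop (nhds 0) := by
    have := (tendsto_pow_atTop_nhds_zero_of_lt_one hq0 hq1).mul_const (1 - 2 * x)⁻¹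
    simpa using this
  have hE1lim : Tendsto E1 atTop (nhds 0) := by
    apply squeeze_zero' (Filter.Eventually.of_forall fun n =>
      mul_nonneg (by positivity) (tail_nonneg _ _)) ?_ hqlim
    filter_upwards [eventually_ge_atTop 1] with n hn
    calc E1 n ≤ (1 - x) ^ n * (2 ^ ((n - 1) + n) * x ^ n * (1 - 2 * x)⁻¹) := by
          exact mul_le_mul_of_nonneg_left (tail_le _ _) (by positivity)
      _ = (1 - x) ^ n * (2 ^ ((n - 1) + n) * x ^ (n - 1) * (1 - 2 * x)⁻¹) * x := by
          rw [show x ^ n = x ^ (n - 1) * x from by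
            rw [← pow_succ, show n - 1 + 1 = n from by omega]]
          ring
      _ ≤ (4 * x * (1 - x)) ^ n * (1 - 2 * x)⁻¹ :=
          hbound n hn _ _ (by omega)
  have hE2lim : Tendsto E2 atTop (nhds 0) := by
    apply squeeze_zero' (Filter.Eventually.of_forall fun n =>
      mul_nonneg (by positivity) (tail_nonneg _ _)) ?_ hqlim
    filter_upwards [eventually_ge_atTop 1] with n hn
    calc E2 n ≤ x * (1 - x) ^ n * (2 ^ (n + (n - 1)) * x ^ (n - 1) * (1 - 2 * x)⁻¹) := by
          exact mul_le_mul_of_nonneg_left (tail_le _ _) (by positivity)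
      _ = (1 - x) ^ n * (2 ^ (n + (n - 1)) * x ^ (n - 1) * (1 - 2 * x)⁻¹) * x := by ring
      _ ≤ (4 * x * (1 - x)) ^ n * (1 - 2 * x)⁻¹ :=
          hbound n hn _ _ (by omega)
  -- the limit of the surrogate function
  have hG : Tendsto (fun n : ℕ => (1 - 2 * x) / (1 - x) - E1 n + E2 n)
      atTop (nhds ((1 - 2 * x) / (1 - x))) := by
    have := (tendsto_const_nhds (x := (1 - 2 * x) / (1 - x)) (f := atTop (α := ℕ))).sub hE1lim
      |>.add hE2lim
    simpa using this
  refine hG.congr' ?_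
  filter_upwards [eventually_ge_atTop 1] with n hn
  obtain ⟨m, rfl⟩ : ∃ m, n = m + 1 := ⟨n - 1, by omega⟩
  have hm1 : ((m:ℝ) + 1) ≠ 0 := by positivity
  -- sum identity
  have key : ∑ j ∈ Finset.range (m+1), (((m+1) - j : ℕ) : ℝ) * (((m+1) - 1 + j).choose j : ℝ) * x ^ j
      = ((m:ℝ)+1) * (∑ j ∈ Finset.range (m+1), f m j)
        - ((m:ℝ)+1) * x * ∑ i ∈ Finset.range m, f (m+1) i := by
    have step1 : ∀ j ∈ Finset.range (m+1),
        (((m+1) - j : ℕ) : ℝ) * (((m+1) - 1 + j).choose j : ℝ) * x ^ j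
          = ((m:ℝ)+1) * f m j - (j : ℝ) * ((m + j).choose j : ℝ) * x ^ j := by
      intro j hj
      rw [Finset.mem_range] at hj
      have : (((m+1) - j : ℕ) : ℝ) = ((m:ℝ)+1) - j := by
        rw [Nat.cast_sub (by omega)]; push_cast; ring
      rw [this, show (m+1) - 1 + j = m + j from by omega]
      simp only [hf]
      ring
    rw [Finset.sum_congr rfl step1, Finset.sum_sub_distrib, Finset.mul_sum]
    congr 1
    rw [Finset.sum_range_succ']
    simp only [Nat.cast_zero, zero_mul, add_zero, Finset.mul_sum]
    apply Finset.sum_congr rfl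
    intro i _
    have hnat : (m + 1 + i).choose (i + 1) * (i + 1) = (m + 1 + i).choose i * (m + 1) := by
      have h := Nat.choose_succ_right_eq (m + 1 + i) i
      rwa [show m + 1 + i - i = m + 1 from by omega] at h
    have hcast : ((i:ℝ) + 1) * ((m + 1 + i).choose (i + 1) : ℝ)
        = ((m:ℝ) + 1) * ((m + 1 + i).choose i : ℝ) := by
      have := congrArg (fun t : ℕ => (t : ℝ)) hnat
      push_cast at this
      linarith [this]
    simp only [hf]
    push_cast
    calc ((i:ℝ) + 1) * ((m + (i + 1)).choose (i + 1) : ℝ) * x ^ (i + 1)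
        = (((i:ℝ) + 1) * ((m + 1 + i).choose (i + 1) : ℝ)) * x ^ (i + 1) := by
          rw [show m + (i + 1) = m + 1 + i from by omega]
      _ = (((m:ℝ) + 1) * ((m + 1 + i).choose i : ℝ)) * x ^ (i + 1) := by rw [hcast]
      _ = ((m:ℝ) + 1) * x * (((m + 1 + i).choose i : ℝ) * x ^ i) := by ring
  -- partial sums via tails
  have hA : ∑ j ∈ Finset.range (m+1), f m j
      = 1 / (1 - x) ^ (m + 1) - ∑' j, f m (j + (m + 1)) := by
    have h := Summable.sum_add_tsum_nat_add (m + 1) (hsum m).summable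
    rw [(hsum m).tsum_eq] at h
    linarith [h]
  have hB : ∑ i ∈ Finset.range m, f (m+1) i
      = 1 / (1 - x) ^ (m + 2) - ∑' i, f (m+1) (i + m) := by
    have h := Summable.sum_add_tsum_nat_add m (hsum (m+1)).summable
    rw [(hsum (m+1)).tsum_eq] at h
    rw [show m + 1 + 1 = m + 2 from rfl] at h
    linarith [h]
  have hE1v : E1 (m+1) = (1 - x) ^ (m+1) * ∑' j, f m (j + (m+1)) := by
    simp only [hE1def, Nat.add_sub_cancel]
  have hE2v : E2 (m+1) = x * (1 - x) ^ (m+1) * ∑' j, f (m+1) (j + m) := by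
    simp only [hE2def, Nat.add_sub_cancel]
  rw [hE1v, hE2v, key, hA, hB]
  push_cast
  field_simp
  ring
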